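/- Let m ≥ 3 and p_1, …, p_m ≥ 1 be integers, and let N = 1 + Σ_{i=1}^m (p_i − 1). Let Q be the Gram matrix of the star-shaped plumbing graph consisting of a central vertex of weight −m together with, for each 1 ≤ i ≤ m, a chain of p_i − 1 vertices of weight −2 attached to the central vertex. Suppose φ is a lattice embedding of Q into ℤ^N such that for all i ≠ j the support of the φ-image of the i-th chain is disjoint from the support of the φ-image of the j-th chain. Then #{i : p_i = 1} ≥ m − 1. -/

import Mathlib

/-- The Gram matrix of a star-shaped plumbing graph: a central vertex of weight
`w0`; for each `i : ι` a chain of `L i` vertices of weight `−2` whose last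
vertex is adjacent to the central vertex; and for each `a : κ` an extra vertex
of weight `w a` adjacent to the central vertex. Diagonal entries are the
weights, entries at adjacent pairs of vertices are 1, all other entries are 0. -/
def starGram {ι κ : Type} [DecidableEq ι] [DecidableEq κ]
    (w0 : ℤ) (L : ι → ℕ) (w : κ → ℤ) :
    Matrix (Unit ⊕ ((Σ i : ι, Fin (L i)) ⊕ κ)) (Unit ⊕ ((Σ i : ι, Fin (L i)) ⊕ κ)) ℤ :=
  fun u v =>
    match u, v with
    | Sum.inl _, Sum.inl _ => w0
    | Sum.inl _, Sum.inr (Sum.inl ⟨i, j⟩) => if (j : ℕ) + 1 = L i then 1 else 0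
    | Sum.inl _, Sum.inr (Sum.inr _) => 1
    | Sum.inr (Sum.inl ⟨i, j⟩), Sum.inl _ => if (j : ℕ) + 1 = L i then 1 else 0
    | Sum.inr (Sum.inr _), Sum.inl _ => 1
    | Sum.inr (Sum.inl ⟨i, j⟩), Sum.inr (Sum.inl ⟨i', j'⟩) =>
        if i = i' then
          if (j : ℕ) = (j' : ℕ) then -2
          else if (j : ℕ) + 1 = (j' : ℕ) ∨ (j' : ℕ) + 1 = (j : ℕ) then 1 else 0
        else 0
    | Sum.inr (Sum.inl _), Sum.inr (Sum.inr _) => 0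
    | Sum.inr (Sum.inr _), Sum.inr (Sum.inl _) => 0
    | Sum.inr (Sum.inr a), Sum.inr (Sum.inr b) => if a = b then w a else 0

/-- A lattice embedding of the Gram matrix `Q` into `ℤ^N`: a ℤ-linear map
`φ : ℤ^V → ℤ^N` with `⟨φ(x), φ(y)⟩ = −xᵀQy` for all `x, y`. -/
def IsLatticeEmbedding {V : Type} [Fintype V] (Q : Matrix V V ℤ) (N : ℕ)
    (φ : (V → ℤ) →ₗ[ℤ] (Fin N → ℤ)) : Prop :=
  ∀ x y : V → ℤ, (∑ m, φ x m * φ y m) = -(∑ a, ∑ b, x a * Q a b * y b)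

/-- The support of the `φ`-image of the `i`-th chain: the union of the supports
of `φ` applied to the standard basis vectors corresponding to its vertices. -/
def chainSupport {ι κ : Type} [DecidableEq ι] [DecidableEq κ]
    {L : ι → ℕ} {N : ℕ}
    (φ : ((Unit ⊕ ((Σ i : ι, Fin (L i)) ⊕ κ)) → ℤ) →ₗ[ℤ] (Fin N → ℤ)) (i : ι) :
    Set (Fin N) :=
  ⋃ j : Fin (L i), Function.support (φ (Pi.single (Sum.inr (Sum.inl ⟨i, j⟩)) 1))

lemma chain_card {N : ℕ} (ℓ : ℕ) (hℓ : 1 ≤ ℓ) (v : Fin ℓ → Fin N → ℤ) (x : Fin N → ℤ)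
    (hvv : ∀ j k : Fin ℓ, (∑ n, v j n * v k n)
      = if (j : ℕ) = k then 2 else if (j : ℕ) + 1 = k ∨ (k : ℕ) + 1 = j then -1 else 0)
    (hvx : ∀ j : Fin ℓ, (∑ n, v j n * x n) = if (j : ℕ) + 1 = ℓ then -1 else 0)
    (S : Finset (Fin N)) (hS : ∀ j n, v j n ≠ 0 → n ∈ S) :
    ℓ + 1 ≤ S.card := by
  classical
  by_contra hcard
  push_neg at hcard
  obtain ⟨nn, rfl⟩ : ∃ nn, ℓ = nn + 1 := ⟨ℓ - 1, by omega⟩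
  set x' : Fin N → ℤ := fun n => if n ∈ S then x n else 0 with hx'
  set w : (Fin (nn + 1) ⊕ Unit) → (↥S → ℚ) :=
    Sum.elim (fun k s => ((v k s : ℤ) : ℚ)) (fun _ s => ((x s.1 : ℤ) : ℚ)) with hw
  have hnli : ¬ LinearIndependent ℚ w := by
    intro hli
    have h := hli.fintype_card_le_finrank
    rw [Module.finrank_fintype_fun_eq_card] at h
    simp only [Fintype.card_sum, Fintype.card_fin, Fintype.card_unit, Fintype.card_coe] at h
    omega
  obtain ⟨g, hg, jne, hjne⟩ := Fintype.not_linearIndependent_iff.mp hnli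
  set a : Fin (nn + 1) → ℚ := fun k => g (Sum.inl k) with ha
  set b : ℚ := g (Sum.inr ()) with hb
  have hrel : ∀ s : ↥S, (∑ k, a k * (v k s : ℚ)) + b * (x s.1 : ℚ) = 0 := by
    intro s
    have h0 := congrFun hg s
    rw [Fintype.sum_sum_type] at h0
    simpa [hw, ha, hb, mul_comm] using h0
  have hvout : ∀ (k : Fin (nn + 1)) n, n ∉ S → v k n = 0 := by
    intro k n hn
    by_contra h
    exact hn (hS k n h)
  set y : Fin N → ℚ := fun n => (∑ k, a k * (v k n : ℚ)) + b * (x' n : ℚ) with hy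
  have hy0 : ∀ n, y n = 0 := by
    intro n
    by_cases hn : n ∈ S
    · have h := hrel ⟨n, hn⟩
      simp only [hy, hx', if_pos hn]
      exact h
    · have h : ∀ k : Fin (nn + 1), v k n = 0 := fun k => hvout k n hn
      simp [hy, hx', if_neg hn, h]
  have key : ∀ z : Fin N → ℤ,
      (∑ k, a k * (∑ n, (z n : ℚ) * (v k n : ℚ))) + b * (∑ n, (z n : ℚ) * (x' n : ℚ)) = 0 := by
    intro z
    have hz : (∑ n, (z n : ℚ) * y n) = 0 := by
      simp [hy0]
    rw [← hz]
    simp only [hy, mul_add, Finset.sum_add_distrib, Finset.mul_sum]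
    congr 1
    · rw [Finset.sum_comm]
      exact Finset.sum_congr rfl fun n _ => Finset.sum_congr rfl fun k _ => by ring
    · exact Finset.sum_congr rfl fun n _ => by ring
  -- inner product values over ℚ
  have hC : ∀ j k : Fin (nn + 1), (∑ n, ((v j n : ℚ)) * (v k n : ℚ))
      = 2 * (if (k : ℕ) = (j : ℕ) then (1:ℚ) else 0)
        - (if (k : ℕ) + 1 = (j : ℕ) then (1:ℚ) else 0)
        - (if (k : ℕ) = (j : ℕ) + 1 then (1:ℚ) else 0) := by
    intro j k
    have hcast : (∑ n, ((v j n : ℚ)) * (v k n : ℚ)) = ((∑ n, v j n * v k n : ℤ) : ℚ) := by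
      push_cast; ring
    rw [hcast, hvv j k]
    split_ifs <;> first | omega | norm_num
  have hx'v : ∀ j : Fin (nn + 1), (∑ n, v j n * x' n) = (∑ n, v j n * x n) := by
    intro j
    refine Finset.sum_congr rfl fun n _ => ?_
    by_cases hn : n ∈ S
    · simp [hx', if_pos hn]
    · simp [hvout j n hn]
  have hX : ∀ j : Fin (nn + 1), (∑ n, (v j n : ℚ) * (x' n : ℚ))
      = if (j : ℕ) + 1 = (nn + 1) then (-1:ℚ) else 0 := by
    intro j
    have h1 : (∑ n, (v j n : ℚ) * (x' n : ℚ)) = ((∑ n, v j n * x' n : ℤ) : ℚ) := by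
      push_cast; ring
    rw [h1, hx'v j, hvx j]
    split_ifs <;> norm_num
  set A : ℕ → ℚ := fun t => if h : t < (nn + 1) then a ⟨t, h⟩ else 0 with hA
  have helper1 : ∀ t : ℕ, (∑ k : Fin (nn + 1), a k * (if (k : ℕ) = t then (1:ℚ) else 0)) = A t := by
    intro t
    by_cases h : t < (nn + 1)
    · rw [show A t = a ⟨t, h⟩ from dif_pos h]
      rw [Finset.sum_eq_single (⟨t, h⟩ : Fin (nn + 1))]
      · simp
      · intro k _ hk
        have hne : (k : ℕ) ≠ t := fun he => hk (Fin.ext he)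
        simp [hne]
      · simp
    · have hne : ∀ k : Fin (nn + 1), (k : ℕ) ≠ t := fun k he => h (he ▸ k.isLt)
      simp [hA, hne, dif_neg h]
      exact fun h' => absurd h' (by omega)
  have helper2 : ∀ s : ℕ,
      (∑ k : Fin (nn + 1), a k * (if (k : ℕ) + 1 = s + 1 then (1:ℚ) else 0)) = A s := by
    intro s
    rw [← helper1 s]
    refine Finset.sum_congr rfl fun k _ => ?_
    congr 1
    simp
  have helper2' : (∑ k : Fin (nn + 1), a k * (if (k : ℕ) + 1 = 0 then (1:ℚ) else 0)) = 0 := by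
    simp
  have master : ∀ j : Fin (nn + 1),
      2 * A (j : ℕ) - (∑ k, a k * (if (k : ℕ) + 1 = (j : ℕ) then (1:ℚ) else 0)) - A ((j : ℕ) + 1)
        + b * (if (j : ℕ) + 1 = (nn + 1) then (-1:ℚ) else 0) = 0 := by
    intro j
    have hk := key (v j)
    have e2 : (∑ k, a k * (∑ n, (v j n : ℚ) * (v k n : ℚ)))
        = 2 * A (j : ℕ) - (∑ k, a k * (if (k : ℕ) + 1 = (j : ℕ) then (1:ℚ) else 0))
          - A ((j : ℕ) + 1) := by
      rw [← helper1 (j : ℕ), ← helper1 ((j : ℕ) + 1)]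
      rw [Finset.mul_sum, ← Finset.sum_sub_distrib, ← Finset.sum_sub_distrib]
      refine Finset.sum_congr rfl fun k _ => ?_
      rw [hC j k]
      ring
    rw [e2, hX j] at hk
    linarith [hk]
  have hrec : ∀ t : ℕ, t < (nn + 1) → A t = ((t : ℚ) + 1) * A 0 := by
    intro t
    induction t using Nat.strong_induction_on with
    | _ t ih =>
      intro ht
      match t with
      | 0 => norm_num
      | s + 1 =>
        have hs : s < (nn + 1) := by omega
        have hm := master ⟨s, hs⟩
        have hne : ¬ (s + 1 = (nn + 1)) := by omega
        rw [if_neg hne] at hm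
        simp only [mul_zero, add_zero] at hm
        have hAs : A s = ((s : ℚ) + 1) * A 0 := ih s (by omega) hs
        have hP : (∑ k, a k * (if (k : ℕ) + 1 = s then (1:ℚ) else 0)) = (s : ℚ) * A 0 := by
          match s, hs, ih with
          | 0, _, _ => simpa using helper2'
          | r + 1, hs, ih =>
            rw [helper2 r, ih r (by omega) (by omega)]
            push_cast
            ring
        rw [hP, hAs] at hm
        push_cast
        linarith
  have hAtop : A (nn + 1) = 0 := dif_neg (by omega)
  have hPt : ∀ t : ℕ, t ≤ nn →
      (∑ k, a k * (if (k : ℕ) + 1 = t then (1:ℚ) else 0)) = (t : ℚ) * A 0 := by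
    intro t ht
    match t, ht with
    | 0, _ => simpa using helper2'
    | r + 1, ht =>
      rw [helper2 r, hrec r (by omega)]
      push_cast
      ring
  have hbval : b = ((nn : ℚ) + 2) * A 0 := by
    have hm := master ⟨nn, by omega⟩
    rw [if_pos rfl] at hm
    have hAnn : A nn = ((nn : ℚ) + 1) * A 0 := hrec nn (by omega)
    rw [hAtop, hPt nn le_rfl, hAnn] at hm
    push_cast at hm ⊢
    linarith
  -- the x' pairing equation
  set B : ℤ := ∑ n, x' n * x' n with hBdef
  have hB0 : 0 ≤ B := Finset.sum_nonneg fun n _ => mul_self_nonneg _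
  have keyx := key x'
  have hxv : ∀ k : Fin (nn + 1), (∑ n, (x' n : ℚ) * (v k n : ℚ))
      = if (k : ℕ) + 1 = (nn + 1) then (-1:ℚ) else 0 := by
    intro k
    rw [← hX k]
    exact Finset.sum_congr rfl fun n _ => by ring
  have hxx : (∑ n, (x' n : ℚ) * (x' n : ℚ)) = (B : ℚ) := by
    rw [hBdef]; push_cast; ring
  rw [hxx] at keyx
  have e3 : (∑ k, a k * (∑ n, (x' n : ℚ) * (v k n : ℚ)))
      = -(A nn) := by
    have : (∑ k : Fin (nn + 1), a k * (∑ n, (x' n : ℚ) * (v k n : ℚ)))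
        = ∑ k : Fin (nn + 1), -(a k * (if (k : ℕ) + 1 = nn + 1 then (1:ℚ) else 0)) := by
      refine Finset.sum_congr rfl fun k _ => ?_
      rw [hxv k]
      split_ifs <;> ring
    rw [this, Finset.sum_neg_distrib, helper2 nn]
  rw [e3] at keyx
  have hAnn : A nn = ((nn : ℚ) + 1) * A 0 := hrec nn (by omega)
  rw [hAnn, hbval] at keyx
  -- A 0 ≠ 0
  have hA0 : A 0 ≠ 0 := by
    cases jne with
    | inl k =>
      have hak : a k ≠ 0 := hjne
      have : A (k : ℕ) = a k := by
        have hlt := k.isLt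
        simp [hA, hlt]
        exact fun h' => absurd h' (by omega)
      have hAk : A (k : ℕ) ≠ 0 := by rw [this]; exact hak
      rw [hrec (k : ℕ) k.isLt] at hAk
      intro h0
      exact hAk (by rw [h0]; ring)
    | inr u =>
      have hbne : b ≠ 0 := by
        have : g (Sum.inr u) ≠ 0 := hjne
        simpa [hb] using this
      rw [hbval] at hbne
      intro h0
      exact hbne (by rw [h0]; ring)
  have hfinal : ((nn : ℚ) + 2) * (B : ℚ) = (nn : ℚ) + 1 := by
    have h : A 0 * (((nn : ℚ) + 2) * (B : ℚ) - ((nn : ℚ) + 1)) = 0 := by linarith [keyx]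
    rcases mul_eq_zero.mp h with h | h
    · exact absurd h hA0
    · linarith
  have hfinalZ : ((nn : ℤ) + 2) * B = (nn : ℤ) + 1 := by exact_mod_cast hfinal
  rcases hB0.lt_or_eq with hpos | h0
  · have h1 : (1 : ℤ) ≤ B := hpos
    have h2 : (nn : ℤ) + 2 ≤ ((nn : ℤ) + 2) * B := by nlinarith
    omega
  · rw [← h0] at hfinalZ
    omega

/-- If a lattice embedding of the plumbing `X(p_1, …, p_m)` for a positive
pretzel link has all chain supports pairwise disjoint, then at least `m − 1`
of the parameters equal 1. -/
theorem stmt_12 (m : ℕ) (hm : 3 ≤ m) (p : Fin m → ℕ) (hp : ∀ i, 1 ≤ p i)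
    (N : ℕ) (hN : N = 1 + ∑ i, (p i - 1))
    (φ : ((Unit ⊕ ((Σ i : Fin m, Fin (p i - 1)) ⊕ Empty)) → ℤ) →ₗ[ℤ] (Fin N → ℤ))
    (hφ : IsLatticeEmbedding
      (starGram (-(m : ℤ)) (fun i => p i - 1) (fun e : Empty => e.elim)) N φ)
    (hdisj : ∀ i j : Fin m, i ≠ j → Disjoint (chainSupport φ i) (chainSupport φ j)) :
    m - 1 ≤ (Finset.univ.filter fun i => p i = 1).card := by
  classical
  set Q := starGram (-(m : ℤ)) (fun i => p i - 1) (fun e : Empty => e.elim) with hQ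
  have pairing : ∀ u w : (Unit ⊕ ((Σ i : Fin m, Fin (p i - 1)) ⊕ Empty)),
      (∑ n, φ (Pi.single u 1) n * φ (Pi.single w 1) n) = -(Q u w) := by
    intro u w
    rw [hφ (Pi.single u 1) (Pi.single w 1)]
    congr 1
    simp [Pi.single_apply, ite_mul, mul_ite, Finset.sum_ite_eq]
  set T : Fin m → Finset (Fin N) :=
    fun i => Finset.univ.filter (fun n => n ∈ chainSupport φ i) with hT
  set K : Finset (Fin m) := Finset.univ.filter (fun i => 2 ≤ p i) with hK
  have hTcard : ∀ i ∈ K, (p i - 1) + 1 ≤ (T i).card := by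
    intro i hi
    have hpi : 2 ≤ p i := by
      rw [hK] at hi
      exact (Finset.mem_filter.mp hi).2
    refine chain_card (p i - 1) (by omega)
      (fun j => φ (Pi.single (Sum.inr (Sum.inl ⟨i, j⟩)) 1))
      (φ (Pi.single (Sum.inl ()) 1)) ?_ ?_ (T i) ?_
    · intro j k
      rw [pairing (Sum.inr (Sum.inl ⟨i, j⟩)) (Sum.inr (Sum.inl ⟨i, k⟩))]
      rw [hQ]
      simp only [starGram, if_pos rfl]
      split_ifs <;> first | omega | norm_num
    · intro j
      rw [pairing (Sum.inr (Sum.inl ⟨i, j⟩)) (Sum.inl ())]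
      rw [hQ]
      simp only [starGram]
      split_ifs <;> first | omega | norm_num
    · intro j n hvn
      rw [hT]
      simp only [Finset.mem_filter, Finset.mem_univ, true_and]
      rw [chainSupport]
      exact Set.mem_iUnion.mpr ⟨j, hvn⟩
  have hTdisj : ∀ i ∈ K, ∀ j ∈ K, i ≠ j → Disjoint (T i) (T j) := by
    intro i _ j _ hij
    have h := hdisj i j hij
    rw [Finset.disjoint_left]
    intro n hni hnj
    rw [hT] at hni hnj
    simp only [Finset.mem_filter, Finset.mem_univ, true_and] at hni hnj
    exact (Set.disjoint_left.mp h) hni hnj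
  have hsum1 : ∑ i ∈ K, (T i).card ≤ N := by
    rw [← Finset.card_biUnion hTdisj]
    calc (K.biUnion T).card ≤ (Finset.univ : Finset (Fin N)).card :=
          Finset.card_le_card (Finset.subset_univ _)
      _ = N := by simp
  have hsum2 : ∑ i ∈ K, ((p i - 1) + 1) ≤ ∑ i ∈ K, (T i).card :=
    Finset.sum_le_sum hTcard
  have hsum3 : ∑ i ∈ K, (p i - 1) = ∑ i, (p i - 1) := by
    refine Finset.sum_subset (Finset.subset_univ _) ?_
    intro i _ hi
    rw [hK] at hi
    simp only [Finset.mem_filter, Finset.mem_univ, true_and] at hi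
    omega
  have hsum4 : ∑ i ∈ K, ((p i - 1) + 1) = (∑ i ∈ K, (p i - 1)) + K.card := by
    rw [Finset.sum_add_distrib, Finset.sum_const, smul_eq_mul, mul_one]
  have hKcard : K.card ≤ 1 := by omega
  have hsplit : (Finset.univ.filter fun i => p i = 1).card
      + (Finset.univ.filter fun i => ¬ p i = 1).card = m := by
    rw [Finset.card_filter_add_card_filter_not]
    simp
  have hKeq : K = Finset.univ.filter (fun i => ¬ p i = 1) := by
    rw [hK]
    ext i
    simp only [Finset.mem_filter, Finset.mem_univ, true_and]
    have := hp i
    omega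
  rw [← hKeq] at hsplit
  omega
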